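/- arXiv:2010.02425 — 2 statements merged into one kernel-verified Lean document; each statement's English description precedes it below -/
import Mathlib

section
/- Let 𝒫 be a set of probability measures and let k-mix(𝒫) = { Σ_{i=1}^k w_i p_i : w ∈ Δ_k, p_i ∈ 𝒫 }. Then for all ε, δ > 0, N(k-mix(𝒫), ε + δ) ≤ N(𝒫, ε)^k · N(Δ_k, δ), where covering numbers are with respect to the total variation norm (and ℓ¹-norm on Δ_k). -/
open Finset MeasureTheory

/-- `w` is a probability vector: nonnegative entries summing to 1. -/
def IsProbVec {k : ℕ} (w : Fin k → ℝ) : Prop :=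
  (∀ i, 0 ≤ w i) ∧ ∑ i, w i = 1

/-- `p` is a probability density with respect to `μ`. -/
def IsDensity {Ω : Type*} [MeasurableSpace Ω] (μ : Measure Ω) (p : Ω → ℝ) : Prop :=
  Measurable p ∧ (∀ ω, 0 ≤ p ω) ∧ ∫ ω, p ω ∂μ = 1

/-- `k`-mixtures of a family of densities. -/
def kMix {Ω : Type*} [MeasurableSpace Ω] (k : ℕ) (P : Set (Ω → ℝ)) : Set (Ω → ℝ) :=
  {f | ∃ w : Fin k → ℝ, IsProbVec w ∧ ∃ p : Fin k → Ω → ℝ,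
    (∀ i, p i ∈ P) ∧ f = fun ω => ∑ i, w i * p i ω}

/-- If `P` (a set of probability densities) admits an `ε`-cover of cardinality `N₁` and
the simplex `Δ_k` admits a `δ`-cover of cardinality `N₂`, then `k`-mix(`P`) admits an
`(ε+δ)`-cover of cardinality at most `N₁ ^ k * N₂`; i.e.
`N(k-mix(P), ε + δ) ≤ N(P, ε) ^ k * N(Δ_k, δ)`. -/
theorem kmix_cover {Ω : Type*} [MeasurableSpace Ω] (μ : Measure Ω)
    (k : ℕ) (P : Set (Ω → ℝ)) (hP : ∀ p ∈ P, IsDensity μ p)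
    (hInt : ∀ p ∈ P, Integrable p μ)
    (ε δ : ℝ) (hε : 0 < ε) (hδ : 0 < δ)
    (C : Finset (Ω → ℝ)) (hCmem : ∀ q ∈ C, q ∈ P)
    (hCcover : ∀ p ∈ P, ∃ q ∈ C, ∫ ω, |p ω - q ω| ∂μ ≤ ε)
    (W : Finset (Fin k → ℝ)) (hWmem : ∀ w ∈ W, IsProbVec w)
    (hWcover : ∀ w : Fin k → ℝ, IsProbVec w → ∃ w' ∈ W, ∑ i, |w i - w' i| ≤ δ) :
    ∃ S : Finset (Ω → ℝ),
      (∀ f ∈ S, f ∈ kMix k P) ∧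
      (S.card : ℝ) ≤ (C.card : ℝ) ^ k * W.card ∧
      ∀ f ∈ kMix k P, ∃ g ∈ S, ∫ ω, |f ω - g ω| ∂μ ≤ ε + δ := by
  classical
  refine ⟨Finset.image (fun wq : (Fin k → ℝ) × (Fin k → (Ω → ℝ)) =>
    fun ω => ∑ i, wq.1 i * wq.2 i ω) (W ×ˢ Fintype.piFinset (fun _ : Fin k => C)), ?_, ?_, ?_⟩
  · intro f hf
    simp only [Finset.mem_image, Finset.mem_product, Fintype.mem_piFinset] at hf
    obtain ⟨⟨w, q⟩, ⟨hw, hq⟩, rfl⟩ := hf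
    exact ⟨w, hWmem w hw, q, fun i => hCmem _ (hq i), rfl⟩
  · calc ((Finset.image _ (W ×ˢ Fintype.piFinset (fun _ : Fin k => C))).card : ℝ)
        ≤ ((W ×ˢ Fintype.piFinset (fun _ : Fin k => C)).card : ℝ) := by
          exact_mod_cast Finset.card_image_le
      _ = (C.card : ℝ) ^ k * W.card := by
          rw [Finset.card_product, Fintype.card_piFinset]
          push_cast
          simp [mul_comm]
  · rintro f ⟨w, hw, p, hpP, rfl⟩
    choose q hqC hqε using fun i => hCcover (p i) (hpP i)
    obtain ⟨w', hw'W, hw'δ⟩ := hWcover w hw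
    refine ⟨fun ω => ∑ i, w' i * q i ω, Finset.mem_image.2
      ⟨(w', q), Finset.mem_product.2 ⟨hw'W, Fintype.mem_piFinset.2 hqC⟩, rfl⟩, ?_⟩
    have hq_int : ∀ i, Integrable (q i) μ := fun i => hInt _ (hCmem _ (hqC i))
    have hp_int : ∀ i, Integrable (p i) μ := fun i => hInt _ (hpP i)
    have hq_nonneg : ∀ i ω, 0 ≤ q i ω := fun i => (hP _ (hCmem _ (hqC i))).2.1
    have hq_one : ∀ i, ∫ ω, q i ω ∂μ = 1 := fun i => (hP _ (hCmem _ (hqC i))).2.2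
    have hterm_int : ∀ i : Fin k,
        Integrable (fun ω => w i * |p i ω - q i ω| + |w i - w' i| * q i ω) μ :=
      fun i => ((((hp_int i).sub (hq_int i)).abs.const_mul _)).add ((hq_int i).const_mul _)
    have hbound_int : Integrable
        (fun ω => ∑ i, (w i * |p i ω - q i ω| + |w i - w' i| * q i ω)) μ :=
      integrable_finset_sum _ fun i _ => hterm_int i
    have key : ∫ ω, |(∑ i, w i * p i ω) - ∑ i, w' i * q i ω| ∂μ ≤
        ∫ ω, ∑ i, (w i * |p i ω - q i ω| + |w i - w' i| * q i ω) ∂μ := by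
      refine integral_mono_of_nonneg (Filter.Eventually.of_forall fun ω => abs_nonneg _)
        hbound_int (Filter.Eventually.of_forall fun ω => ?_)
      calc |(∑ i, w i * p i ω) - ∑ i, w' i * q i ω|
          = |∑ i, (w i * p i ω - w' i * q i ω)| := by rw [Finset.sum_sub_distrib]
        _ ≤ ∑ i, |w i * p i ω - w' i * q i ω| := Finset.abs_sum_le_sum_abs _ _
        _ ≤ ∑ i, (w i * |p i ω - q i ω| + |w i - w' i| * q i ω) := by
            refine Finset.sum_le_sum fun i _ => ?_
            have h : w i * p i ω - w' i * q i ω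
                = w i * (p i ω - q i ω) + (w i - w' i) * q i ω := by ring
            rw [h]
            refine (abs_add_le _ _).trans ?_
            rw [abs_mul, abs_mul, abs_of_nonneg (hw.1 i), abs_of_nonneg (hq_nonneg i ω)]
    have hRHS : ∫ ω, ∑ i, (w i * |p i ω - q i ω| + |w i - w' i| * q i ω) ∂μ
        = ∑ i, (w i * ∫ ω, |p i ω - q i ω| ∂μ + |w i - w' i|) := by
      rw [integral_finset_sum _ fun i _ => hterm_int i]
      refine Finset.sum_congr rfl fun i _ => ?_
      have hA : Integrable (fun ω => w i * |p i ω - q i ω|) μ :=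
        ((hp_int i).sub (hq_int i)).abs.const_mul _
      have hB : Integrable (fun ω => |w i - w' i| * q i ω) μ := (hq_int i).const_mul _
      rw [integral_add hA hB,
        integral_const_mul, integral_const_mul, hq_one i, mul_one]
    refine key.trans ?_
    rw [hRHS, Finset.sum_add_distrib]
    have h1 : ∑ i, w i * ∫ ω, |p i ω - q i ω| ∂μ ≤ ε := by
      calc ∑ i, w i * ∫ ω, |p i ω - q i ω| ∂μ ≤ ∑ i, w i * ε :=
            Finset.sum_le_sum fun i _ => mul_le_mul_of_nonneg_left (hqε i) (hw.1 i)
        _ = ε := by rw [← Finset.sum_mul, hw.2, one_mul]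
    exact add_le_add h1 hw'δ
end

section
/- For any probability density p on [0,1)^d, if b(n) → ∞ and k(n) → ∞ then min_{q ∈ H̃^{k(n)}_{d,b(n)}} ‖p − q‖_{L¹} → 0, i.e., the bias of the best Tucker histogram approximation of any density goes to zero. -/
open Finset MeasureTheory Filter

/-- `W` is a probability tensor: nonnegative entries summing to 1. -/
def IsProbTensor {d k : ℕ} (W : (Fin d → Fin k) → ℝ) : Prop :=
  (∀ S, 0 ≤ W S) ∧ ∑ S, W S = 1

/-- The one-dimensional histogram basis density `h_{1,b,i}` (bin indices from 0). -/
noncomputable def h1 (b : ℕ) (i : Fin b) : ℝ → ℝ :=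
  fun x => (b : ℝ) * (Set.Ico ((i : ℝ) / b) (((i : ℝ) + 1) / b)).indicator (fun _ => (1 : ℝ)) x

/-- One-dimensional histogram densities with `b` equal-width bins on `[0,1)`. -/
noncomputable def Hist1 (b : ℕ) : Set (ℝ → ℝ) :=
  {f | ∃ v : Fin b → ℝ, IsProbVec v ∧ f = fun x => ∑ i, v i * h1 b i x}

/-- Tucker histograms `H̃^k_{d,b}` on `[0,1)^d`. -/
noncomputable def TuckerHist (d b k : ℕ) : Set ((Fin d → ℝ) → ℝ) :=
  {f | ∃ W : (Fin d → Fin k) → ℝ, IsProbTensor W ∧ ∃ g : Fin d → Fin k → ℝ → ℝ,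
    (∀ i j, g i j ∈ Hist1 b) ∧
    f = fun x => ∑ S : Fin d → Fin k, W S * ∏ i, g i (S i) (x i)}

/-- The unit cube `[0,1)^d`. -/
def unitCube (d : ℕ) : Set (Fin d → ℝ) :=
  Set.univ.pi fun _ => Set.Ico (0 : ℝ) 1


noncomputable section THB

/-- the `j`-th bin of width `1/b`. -/
def bin (b : ℕ) (j : Fin b) : Set ℝ := Set.Ico ((j : ℝ) / b) (((j : ℝ) + 1) / b)

def I01 : Set ℝ := Set.Ico (0 : ℝ) 1

lemma measurableSet_bin (b : ℕ) (j : Fin b) : MeasurableSet (bin b j) :=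
  measurableSet_Ico

lemma bpos {b : ℕ} (j : Fin b) : (0:ℝ) < b := by exact_mod_cast j.pos

lemma bin_subset {b : ℕ} (j : Fin b) : bin b j ⊆ I01 := by
  have hb : (0:ℝ) < b := bpos j
  intro x hx
  obtain ⟨h1, h2⟩ := hx
  constructor
  · exact le_trans (by positivity) h1
  · refine lt_of_lt_of_le h2 ?_
    rw [div_le_one hb]
    have : (j : ℝ) + 1 ≤ b := by exact_mod_cast j.2
    exact this

lemma bin_eq_of_mem {b : ℕ} {i j : Fin b} {x : ℝ} (hi : x ∈ bin b i) (hj : x ∈ bin b j) :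
    i = j := by
  have hb : (0:ℝ) < b := bpos j
  have key : ∀ {i' j' : Fin b}, x ∈ bin b i' → x ∈ bin b j' → i' < j' → False := by
    intro i' j' hi' hj' h
    have h1 : (i' : ℝ) + 1 ≤ (j' : ℝ) := by exact_mod_cast Fin.lt_iff_val_lt_val.mp h
    have h2 : ((i' : ℝ) + 1) / b ≤ (j' : ℝ) / b := by gcongr
    exact absurd (lt_of_lt_of_le hi'.2 (h2.trans hj'.1)) (lt_irrefl x)
  by_contra hne
  rcases lt_or_gt_of_ne hne with h | h
  · exact key hi hj h
  · exact key hj hi h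

lemma bin_disjoint {b : ℕ} {i j : Fin b} (h : i ≠ j) : Disjoint (bin b i) (bin b j) := by
  rw [Set.disjoint_left]
  intro x hi hj
  exact h (bin_eq_of_mem hi hj)

lemma I01_eq_iUnion (b : ℕ) (hb : 0 < b) : I01 = ⋃ j : Fin b, bin b j := by
  apply Set.Subset.antisymm
  · intro x hx
    have hbR : (0:ℝ) < b := by exact_mod_cast hb
    have hxb : x * b < b := by
      calc x * b < 1 * b := by exact mul_lt_mul_of_pos_right hx.2 hbR
      _ = b := one_mul _
    have hmlt : ⌊x * b⌋₊ < b := by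
      have hnn : 0 ≤ x * b := mul_nonneg hx.1 hbR.le
      have : (⌊x * b⌋₊ : ℝ) < b := lt_of_le_of_lt (Nat.floor_le hnn) hxb
      exact_mod_cast this
    refine Set.mem_iUnion.mpr ⟨⟨⌊x * b⌋₊, hmlt⟩, ?_, ?_⟩
    · rw [div_le_iff₀ hbR]
      exact_mod_cast Nat.floor_le (mul_nonneg hx.1 hbR.le)
    · rw [lt_div_iff₀ hbR]
      exact_mod_cast Nat.lt_floor_add_one (x * b)
  · intro x hx
    obtain ⟨_, ⟨j, rfl⟩, hj⟩ := hx
    exact bin_subset j hj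

lemma volume_bin {b : ℕ} (j : Fin b) : volume (bin b j) = ENNReal.ofReal (1 / b) := by
  rw [bin, Real.volume_Ico]
  rw [add_div]
  ring_nf

section P2
open Set

lemma measurable_h1 (b : ℕ) (j : Fin b) : Measurable (h1 b j) :=
  (measurable_const.indicator measurableSet_Ico).const_mul _

lemma h1_nonneg (b : ℕ) (j : Fin b) (x : ℝ) : 0 ≤ h1 b j x := by
  unfold h1
  exact mul_nonneg (bpos j).le (Set.indicator_nonneg (fun _ _ => zero_le_one) x)

lemma h1_le (b : ℕ) (j : Fin b) (x : ℝ) : h1 b j x ≤ b := by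
  unfold h1
  rcases Set.indicator_eq_zero_or_self (Set.Ico ((j : ℝ) / b) (((j : ℝ) + 1) / b))
    (fun _ => (1:ℝ)) x with h | h
  · rw [h]; simpa using (bpos j).le
  · rw [h]; simp

lemma h1_eq_indicator (b : ℕ) (j : Fin b) (x : ℝ) :
    h1 b j x = (b : ℝ) * (bin b j).indicator (fun _ => (1:ℝ)) x := rfl

lemma h1_of_mem {b : ℕ} {j : Fin b} {x : ℝ} (h : x ∈ bin b j) : h1 b j x = b := by
  rw [h1_eq_indicator, Set.indicator_of_mem h, mul_one]

lemma h1_of_not_mem {b : ℕ} {j : Fin b} {x : ℝ} (h : x ∉ bin b j) : h1 b j x = 0 := by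
  rw [h1_eq_indicator, Set.indicator_of_notMem h, mul_zero]

/-- integral of h1 over a measurable set `s` is `b * vol (s ∩ bin)`. -/
lemma setIntegral_h1 (b : ℕ) (j : Fin b) {s : Set ℝ} (hs : MeasurableSet s) :
    ∫ x in s, h1 b j x = (b : ℝ) * (volume (s ∩ bin b j)).toReal := by
  simp only [h1_eq_indicator]
  rw [integral_const_mul, setIntegral_indicator (measurableSet_bin b j)]
  rw [setIntegral_const, smul_eq_mul, measureReal_def, mul_one]

lemma volume_I01_inter_bin {b : ℕ} (j : Fin b) : volume (I01 ∩ bin b j) = ENNReal.ofReal (1/b) := by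
  rw [Set.inter_eq_right.mpr (bin_subset j), volume_bin]

lemma integral_I01_h1 (b : ℕ) (j : Fin b) : ∫ x in I01, h1 b j x = 1 := by
  rw [setIntegral_h1 (s := I01) b j measurableSet_Ico, volume_I01_inter_bin,
    ENNReal.toReal_ofReal (by positivity)]
  rw [one_div, mul_inv_cancel₀ (bpos j).ne']

lemma integrableOn_I01_of_bounded {f : ℝ → ℝ} (hf : Measurable f) {M : ℝ}
    (hM : ∀ x, |f x| ≤ M) : IntegrableOn f I01 volume := by
  apply Measure.integrableOn_of_bounded (M := M)
  · rw [I01, Real.volume_Ico]; exact ENNReal.ofReal_ne_top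
  · exact hf.aestronglyMeasurable
  · exact ae_of_all _ fun x => hM x

lemma integrableOn_I01_h1 (b : ℕ) (j : Fin b) : IntegrableOn (h1 b j) I01 volume :=
  integrableOn_I01_of_bounded (measurable_h1 b j)
    (fun x => abs_le.mpr ⟨neg_nonpos.mpr (by exact_mod_cast (bpos j).le) |>.trans (h1_nonneg b j x), h1_le b j x⟩)

/-- Splitting an integral over `I01` into bins. -/
lemma integral_I01_eq_sum_bins {b : ℕ} (hb : 0 < b) {f : ℝ → ℝ} (hf : IntegrableOn f I01) :
    ∫ x in I01, f x = ∑ j : Fin b, ∫ x in bin b j, f x := by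
  have hU : I01 = ⋃ j ∈ Finset.univ (α := Fin b), bin b j := by
    rw [I01_eq_iUnion b hb]; simp
  rw [hU, integral_biUnion_finset]
  · intro i _; exact measurableSet_bin b i
  · intro i _ j _ hij; exact bin_disjoint hij
  · intro i _
    apply hf.mono_set
    rw [I01_eq_iUnion b hb]
    exact Set.subset_iUnion _ i

end P2

section P3

lemma nat_lt_div_succ_mul (n B : ℕ) (hB : 0 < B) : n < (n / B + 1) * B := by
  have h := Nat.div_add_mod n B
  have h2 : n % B < B := Nat.mod_lt n hB
  calc n = B * (n / B) + n % B := h.symm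
    _ < B * (n / B) + B := by omega
    _ = (n / B + 1) * B := by ring

/-- properties of members of `Hist1 b`. -/
lemma hist1_props {b : ℕ} {g : ℝ → ℝ} (hg : g ∈ Hist1 b) :
    Measurable g ∧ (∀ x, 0 ≤ g x) ∧ (∀ x, g x ≤ b) ∧ ∫ x in I01, g x = 1 := by
  obtain ⟨v, ⟨hvnn, hvsum⟩, rfl⟩ := hg
  refine ⟨?_, ?_, ?_, ?_⟩
  · exact Finset.measurable_sum _ fun i _ => (measurable_h1 b i).const_mul _
  · intro x
    exact Finset.sum_nonneg fun i _ => mul_nonneg (hvnn i) (h1_nonneg b i x)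
  · intro x
    calc ∑ i, v i * h1 b i x ≤ ∑ i, v i * b := by
          apply Finset.sum_le_sum
          intro i _
          exact mul_le_mul_of_nonneg_left (h1_le b i x) (hvnn i)
      _ = b := by rw [← Finset.sum_mul, hvsum, one_mul]
  · rw [integral_finset_sum]
    · simp_rw [integral_const_mul, integral_I01_h1]
      simpa using hvsum
    · intro i _
      exact (integrableOn_I01_h1 b i).const_mul _

/-- Key 1-D approximation: every `h1 B j` is within `4B/b` of some `b`-bin histogram. -/
lemma hist1_approx (B : ℕ) (j : Fin B) (b : ℕ) (hb : 0 < b) :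
    ∃ g ∈ Hist1 b, ∫ x in I01, |h1 B j x - g x| ≤ 4 * B / b := by
  have hbR : (0:ℝ) < b := by exact_mod_cast hb
  have hBR : (0:ℝ) < B := bpos j
  -- weights
  set v : Fin b → ℝ := fun i => ∫ x in bin b i, h1 B j x with hv_def
  have hv_nn : ∀ i, 0 ≤ v i := fun i =>
    setIntegral_nonneg (measurableSet_bin b i) (fun x _ => h1_nonneg B j x)
  have hvol : ∀ i : Fin b, (volume (bin b i)).toReal = 1 / b := by
    intro i
    rw [volume_bin, ENNReal.toReal_ofReal (by positivity)]
  have hv_le : ∀ i, v i ≤ B * (1 / b) := by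
    intro i
    calc v i ≤ ∫ _x in bin b i, (B:ℝ) := by
          apply setIntegral_mono_on
          · exact (integrableOn_I01_h1 B j).mono_set (by intro x hx; exact bin_subset i hx)
          · exact integrableOn_const (show volume (bin b i) < ⊤ by rw [volume_bin]; exact ENNReal.ofReal_lt_top).ne
          · exact measurableSet_bin b i
          · intro x _; exact h1_le B j x
      _ = B * (1 / b) := by rw [setIntegral_const, smul_eq_mul, measureReal_def, hvol i, mul_comm]
  have hv_sum : ∑ i, v i = 1 := by
    rw [hv_def]
    rw [← integral_I01_eq_sum_bins hb (integrableOn_I01_h1 B j)]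
    exact integral_I01_h1 B j
  refine ⟨fun x => ∑ i, v i * h1 b i x, ⟨v, ⟨hv_nn, hv_sum⟩, rfl⟩, ?_⟩
  set g : ℝ → ℝ := fun x => ∑ i, v i * h1 b i x with hg_def
  have hg_mem : g ∈ Hist1 b := ⟨v, ⟨hv_nn, hv_sum⟩, rfl⟩
  obtain ⟨hg_meas, hg_nn, hg_le, _⟩ := hist1_props hg_mem
  -- g is constant b * v i on bin b i
  have hg_on_bin : ∀ (i : Fin b) (x : ℝ), x ∈ bin b i → g x = b * v i := by
    intro i x hx
    show (∑ i', v i' * h1 b i' x) = (b:ℝ) * v i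
    rw [Finset.sum_eq_single_of_mem i (Finset.mem_univ i)]
    · rw [h1_of_mem hx]; ring
    · intro i' _ hne
      rw [h1_of_not_mem (fun hx' => hne (bin_eq_of_mem hx' hx)), mul_zero]
  -- integrability of the integrand
  have hint_abs : IntegrableOn (fun x => |h1 B j x - g x|) I01 := by
    apply integrableOn_I01_of_bounded
    · exact ((measurable_h1 B j).sub hg_meas).abs
    · intro x
      rw [abs_abs]
      calc |h1 B j x - g x| ≤ |h1 B j x| + |g x| := abs_sub _ _
        _ ≤ B + b := add_le_add
            (by rw [abs_of_nonneg (h1_nonneg B j x)]; exact h1_le B j x)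
            (by rw [abs_of_nonneg (hg_nn x)]; exact hg_le x)
  -- split into bins
  rw [integral_I01_eq_sum_bins hb hint_abs]
  -- the two bad indices
  set m1 := (j : ℕ) * b / B with hm1
  set m2 := ((j : ℕ) + 1) * b / B with hm2
  -- per-bin analysis
  have hterm : ∀ i : Fin b,
      (∫ x in bin b i, |h1 B j x - g x|) ≤ if (i : ℕ) = m1 ∨ (i : ℕ) = m2 then (2 * (B:ℝ) / b) else 0 := by
    intro i
    by_cases hP : (i : ℕ) = m1 ∨ (i : ℕ) = m2
    · rw [if_pos hP]
      calc (∫ x in bin b i, |h1 B j x - g x|) ≤ ∫ _x in bin b i, 2 * (B:ℝ) := by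
            apply setIntegral_mono_on
            · exact hint_abs.mono_set (fun x hx => bin_subset i hx)
            · exact integrableOn_const (show volume (bin b i) < ⊤ by rw [volume_bin]; exact ENNReal.ofReal_lt_top).ne
            · exact measurableSet_bin b i
            · intro x hx
              have h1b : g x = b * v i := hg_on_bin i x hx
              calc |h1 B j x - g x| ≤ |h1 B j x| + |g x| := abs_sub _ _
                _ ≤ B + B := by
                    apply add_le_add
                    · rw [abs_of_nonneg (h1_nonneg B j x)]; exact h1_le B j x
                    · rw [abs_of_nonneg (hg_nn x), h1b]
                      calc (b:ℝ) * v i ≤ b * (B * (1/b)) :=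
                            mul_le_mul_of_nonneg_left (hv_le i) hbR.le
                        _ = B := by field_simp
                _ = 2 * B := by ring
        _ = 2 * B / b := by rw [setIntegral_const, smul_eq_mul, measureReal_def, hvol i]; ring
    · rw [if_neg hP]
      push_neg at hP
      obtain ⟨hPm1, hPm2⟩ := hP
      -- show the integrand vanishes on the bin
      have hzero : ∀ x ∈ bin b i, |h1 B j x - g x| = 0 := by
        rcases lt_or_gt_of_ne hPm1 with hlt | hgt
        · -- i < m1 : bin disjoint from target bin, h1 = 0 and v i = 0
          have hout : ∀ x ∈ bin b i, x ∉ bin B j := by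
            intro x hx hxJ
            have h1 : x < ((i:ℝ) + 1) / b := hx.2
            have h2 : ((i:ℝ) + 1) / b ≤ (m1 : ℝ) / b := by
              gcongr
              exact_mod_cast hlt
            have h3 : (m1 : ℝ) / b ≤ (j : ℝ) / B := by
              rw [div_le_div_iff₀ hbR hBR]
              have : m1 * B ≤ (j:ℕ) * b := Nat.div_mul_le_self _ _
              exact_mod_cast this
            exact absurd (lt_of_lt_of_le h1 (h2.trans h3)) (not_lt.mpr hxJ.1)
          have hvi : v i = 0 := by
            show (∫ x in bin b i, h1 B j x) = _
            rw [setIntegral_congr_fun (measurableSet_bin b i)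
              (fun x hx => h1_of_not_mem (hout x hx))]
            exact integral_zero _ _
          intro x hx
          rw [h1_of_not_mem (hout x hx), hg_on_bin i x hx, hvi]
          simp
        · -- i > m1
          rcases lt_or_gt_of_ne hPm2 with hlt2 | hgt2
          · -- m1 < i < m2 : bin inside target bin
            have hin : ∀ x ∈ bin b i, x ∈ bin B j := by
              intro x hx
              constructor
              · have h2 : ((m1:ℝ) + 1) / b ≤ (i : ℝ) / b := by
                  gcongr
                  exact_mod_cast hgt
                have h3 : (j : ℝ) / B ≤ ((m1:ℝ) + 1) / b := by
                  rw [div_le_div_iff₀ hBR hbR]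
                  have : (j:ℕ) * b < (m1 + 1) * B := nat_lt_div_succ_mul _ _ j.pos
                  exact_mod_cast this.le
                exact le_trans (h3.trans h2) hx.1
              · have h2 : ((i:ℝ) + 1) / b ≤ (m2 : ℝ) / b := by
                  gcongr
                  exact_mod_cast hlt2
                have h3 : (m2 : ℝ) / b ≤ ((j : ℝ) + 1) / B := by
                  rw [div_le_div_iff₀ hbR hBR]
                  have : m2 * B ≤ ((j:ℕ) + 1) * b := Nat.div_mul_le_self _ _
                  exact_mod_cast this
                exact lt_of_lt_of_le hx.2 (h2.trans h3)
            have hvi : v i = B * (1 / b) := by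
              show (∫ x in bin b i, h1 B j x) = _
              rw [setIntegral_congr_fun (measurableSet_bin b i)
                (fun x hx => h1_of_mem (hin x hx))]
              rw [setIntegral_const, smul_eq_mul, measureReal_def, hvol i, mul_comm]
            intro x hx
            rw [h1_of_mem (hin x hx), hg_on_bin i x hx, hvi]
            have : (b:ℝ) * (B * (1/b)) = B := by field_simp
            rw [this, sub_self, abs_zero]
          · -- i > m2 : bin disjoint from target bin
            have hout : ∀ x ∈ bin b i, x ∉ bin B j := by
              intro x hx hxJ
              have h1 : (i:ℝ) / b ≤ x := hx.1
              have h2 : ((m2:ℝ) + 1) / b ≤ (i : ℝ) / b := by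
                gcongr
                exact_mod_cast hgt2
              have h3 : ((j : ℝ) + 1) / B < ((m2:ℝ) + 1) / b := by
                rw [div_lt_div_iff₀ hBR hbR]
                have : ((j:ℕ) + 1) * b < (m2 + 1) * B := nat_lt_div_succ_mul _ _ j.pos
                exact_mod_cast this
              exact absurd (lt_of_lt_of_le (h3.trans_le h2) (h1.trans hxJ.2.le)) (lt_irrefl _)
            have hvi : v i = 0 := by
              show (∫ x in bin b i, h1 B j x) = _
              rw [setIntegral_congr_fun (measurableSet_bin b i)
                (fun x hx => h1_of_not_mem (hout x hx))]
              exact integral_zero _ _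
            intro x hx
            rw [h1_of_not_mem (hout x hx), hg_on_bin i x hx, hvi]
            simp
      rw [setIntegral_congr_fun (measurableSet_bin b i) hzero]
      simp
  -- sum the per-bin bounds
  calc (∑ i : Fin b, ∫ x in bin b i, |h1 B j x - g x|)
      ≤ ∑ i : Fin b, (if (i : ℕ) = m1 ∨ (i : ℕ) = m2 then (2 * (B:ℝ) / b) else 0) :=
        Finset.sum_le_sum (fun i _ => hterm i)
    _ ≤ 4 * B / b := by
        classical
        have hcard : (Finset.univ.filter (fun i : Fin b => (i:ℕ) = m1 ∨ (i:ℕ) = m2)).card ≤ 2 := by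
          rw [Finset.filter_or]
          refine le_trans (Finset.card_union_le _ _) ?_
          have h1 : ∀ m : ℕ, (Finset.univ.filter (fun i : Fin b => (i:ℕ) = m)).card ≤ 1 := by
            intro m
            apply Finset.card_le_one.mpr
            intro a ha c hc
            simp only [Finset.mem_filter] at ha hc
            exact Fin.ext (ha.2.trans hc.2.symm)
          have := h1 m1
          have := h1 m2
          omega
        rw [Finset.sum_ite, Finset.sum_const, Finset.sum_const_zero, add_zero, nsmul_eq_mul]
        have hpos : (0:ℝ) ≤ 2 * B / b := by positivity
        calc ((Finset.univ.filter (fun i : Fin b => (i:ℕ) = m1 ∨ (i:ℕ) = m2)).card : ℝ) * (2 * B / b)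
            ≤ 2 * (2 * B / b) := by
              apply mul_le_mul_of_nonneg_right _ hpos
              exact_mod_cast hcard
          _ = 4 * B / b := by ring

end P3

section P4

/-- sub-cube of the grid. -/
def cubeS (d B : ℕ) (S : Fin d → Fin B) : Set (Fin d → ℝ) :=
  Set.univ.pi fun i => bin B (S i)

lemma measurableSet_unitCube (d : ℕ) : MeasurableSet (unitCube d) :=
  MeasurableSet.univ_pi fun _ => measurableSet_Ico

lemma measurableSet_cubeS (d B : ℕ) (S : Fin d → Fin B) : MeasurableSet (cubeS d B S) :=
  MeasurableSet.univ_pi fun i => measurableSet_bin B (S i)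

lemma mem_cubeS {d B : ℕ} {S : Fin d → Fin B} {x : Fin d → ℝ} :
    x ∈ cubeS d B S ↔ ∀ i, x i ∈ bin B (S i) := by
  simp [cubeS, Set.mem_univ_pi]

lemma mem_unitCube {d : ℕ} {x : Fin d → ℝ} :
    x ∈ unitCube d ↔ ∀ i, x i ∈ I01 := by
  simp [unitCube, I01, Set.mem_univ_pi]

lemma cubeS_subset_unitCube {d B : ℕ} (S : Fin d → Fin B) : cubeS d B S ⊆ unitCube d := by
  intro x hx
  rw [mem_unitCube]
  exact fun i => bin_subset (S i) (mem_cubeS.mp hx i)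

lemma volume_unitCube (d : ℕ) : volume (unitCube d) = 1 := by
  rw [unitCube, volume_pi_pi]
  simp [Real.volume_Ico]

lemma volume_cubeS (d B : ℕ) (S : Fin d → Fin B) :
    volume (cubeS d B S) = ENNReal.ofReal ((1 / B) ^ d) := by
  rw [cubeS, volume_pi_pi]
  simp only [volume_bin]
  rw [Finset.prod_const, ← ENNReal.ofReal_pow (by positivity), Finset.card_univ, Fintype.card_fin]

lemma volume_cubeS_toReal (d B : ℕ) (S : Fin d → Fin B) :
    (volume (cubeS d B S)).toReal = (1 / B) ^ d := by
  rw [volume_cubeS, ENNReal.toReal_ofReal (by positivity)]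

lemma cubeS_eq_of_mem {d B : ℕ} {S S' : Fin d → Fin B} {x : Fin d → ℝ}
    (h : x ∈ cubeS d B S) (h' : x ∈ cubeS d B S') : S = S' :=
  funext fun i => bin_eq_of_mem (mem_cubeS.mp h i) (mem_cubeS.mp h' i)

lemma unitCube_eq_iUnion (d B : ℕ) (hB : 0 < B) :
    unitCube d = ⋃ S : Fin d → Fin B, cubeS d B S := by
  apply Set.Subset.antisymm
  · intro x hx
    have : ∀ i, ∃ j : Fin B, x i ∈ bin B j := by
      intro i
      have := (mem_unitCube.mp hx) i
      rw [I01_eq_iUnion B hB] at this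
      exact Set.mem_iUnion.mp this
    choose S hS using this
    exact Set.mem_iUnion.mpr ⟨S, mem_cubeS.mpr hS⟩
  · exact Set.iUnion_subset fun S => cubeS_subset_unitCube S

lemma measurable_pi_prod {d : ℕ} (g : Fin d → ℝ → ℝ) (hm : ∀ i, Measurable (g i)) :
    Measurable (fun x : Fin d → ℝ => ∏ i, g i (x i)) :=
  Finset.measurable_prod _ fun i _ => (hm i).comp (measurable_pi_apply i)

lemma integrableOn_cube_of_bounded {d : ℕ} {f : (Fin d → ℝ) → ℝ}
    (hf : Measurable f) {M : ℝ} (hM : ∀ x, |f x| ≤ M) :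
    IntegrableOn f (unitCube d) volume := by
  apply Measure.integrableOn_of_bounded (M := M)
  · rw [volume_unitCube]; exact ENNReal.one_ne_top
  · exact hf.aestronglyMeasurable
  · exact ae_of_all _ fun x => hM x

lemma integral_cube_eq_sum_cubeS {d B : ℕ} (hB : 0 < B) {f : (Fin d → ℝ) → ℝ}
    (hf : IntegrableOn f (unitCube d)) :
    ∫ x in unitCube d, f x = ∑ S : Fin d → Fin B, ∫ x in cubeS d B S, f x := by
  have hU : unitCube d = ⋃ S ∈ Finset.univ (α := Fin d → Fin B), cubeS d B S := by
    rw [unitCube_eq_iUnion d B hB]; simp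
  rw [hU, integral_biUnion_finset]
  · intro S _; exact measurableSet_cubeS d B S
  · intro S _ S' _ hne
    rw [Function.onFun, Set.disjoint_left]
    intro x hx hx'
    exact hne (cubeS_eq_of_mem hx hx')
  · intro S _
    exact hf.mono_set (cubeS_subset_unitCube S)

/-- indicator of the cube factorizes. -/
lemma indicator_cube_prod {d : ℕ} (g : Fin d → ℝ → ℝ) :
    (unitCube d).indicator (fun x => ∏ i, g i (x i)) =
      fun x => ∏ i, I01.indicator (g i) (x i) := by
  funext x
  by_cases hx : x ∈ unitCube d
  · rw [Set.indicator_of_mem hx]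
    exact Finset.prod_congr rfl fun i _ =>
      (Set.indicator_of_mem (mem_unitCube.mp hx i) (g i)).symm
  · rw [Set.indicator_of_notMem hx]
    obtain ⟨i, hi⟩ := not_forall.mp (fun h => hx (mem_unitCube.mpr h))
    exact (Finset.prod_eq_zero (Finset.mem_univ i)
      (Set.indicator_of_notMem hi (g i))).symm

/-- Fubini for the unit cube. -/
lemma cube_integral_prod {d : ℕ} (g : Fin d → ℝ → ℝ) :
    ∫ x in unitCube d, ∏ i, g i (x i) = ∏ i, ∫ t in I01, g i t := by
  rw [← integral_indicator (measurableSet_unitCube d), indicator_cube_prod]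
  rw [integral_fintype_prod_volume_eq_prod (fun i => I01.indicator (g i))]
  exact Finset.prod_congr rfl fun i _ => integral_indicator measurableSet_Ico

end P4

section P5

/-- Telescoping: the L¹ distance between two products of densities is at most the sum of
the 1-D L¹ distances. -/
lemma telescope {d : ℕ} (a c : Fin d → ℝ → ℝ) (M : ℝ) (hM : 0 ≤ M)
    (ham : ∀ i, Measurable (a i)) (hcm : ∀ i, Measurable (c i))
    (hann : ∀ i x, 0 ≤ a i x) (hcnn : ∀ i x, 0 ≤ c i x)
    (habd : ∀ i x, a i x ≤ M) (hcbd : ∀ i x, c i x ≤ M)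
    (ha1 : ∀ i, ∫ t in I01, a i t = 1) (hc1 : ∀ i, ∫ t in I01, c i t = 1)
    (ε : Fin d → ℝ) (hε : ∀ i, ∫ t in I01, |a i t - c i t| ≤ ε i) :
    ∫ x in unitCube d, |(∏ i, a i (x i)) - ∏ i, c i (x i)| ≤ ∑ i, ε i := by
  classical
  have hprod_int : ∀ (u : Fin d → ℝ → ℝ), (∀ i, Measurable (u i)) → (∀ i x, 0 ≤ u i x) →
      (∀ i x, u i x ≤ 2 * M) →
      IntegrableOn (fun x : Fin d → ℝ => ∏ i, u i (x i)) (unitCube d) := by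
    intro u hm hnn hbd
    apply integrableOn_cube_of_bounded (measurable_pi_prod u hm) (M := (2 * M) ^ d)
    intro x
    rw [abs_of_nonneg (Finset.prod_nonneg fun i _ => hnn i (x i))]
    calc (∏ i, u i (x i)) ≤ ∏ _i : Fin d, (2 * M) :=
          Finset.prod_le_prod (fun i _ => hnn i (x i)) (fun i _ => hbd i (x i))
      _ = (2 * M) ^ d := by rw [Finset.prod_const, Finset.card_univ, Fintype.card_fin]
  have key : ∀ s : Finset (Fin d),
      ∫ x in unitCube d, |(∏ i, (if i ∈ s then a i (x i) else c i (x i))) - ∏ i, c i (x i)|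
        ≤ ∑ i ∈ s, ε i := by
    intro s
    induction s using Finset.induction_on with
    | empty =>
      simp
    | @insert i₀ s hi₀ IH =>
      set m : Fin d → ℝ → ℝ := fun i t => if i ∈ s then a i t else c i t with hm_def
      set m' : Fin d → ℝ → ℝ := fun i t => if i ∈ insert i₀ s then a i t else c i t with hm'_def
      set D : Fin d → ℝ → ℝ := fun i => if i = i₀ then (fun t => |a i₀ t - c i₀ t|) else m i
        with hD_def
      have hm_cases : ∀ i, m i = a i ∨ m i = c i := by
        intro i
        by_cases h : i ∈ s
        · left; funext t; simp only [hm_def]; rw [if_pos h]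
        · right; funext t; simp only [hm_def]; rw [if_neg h]
      have hm'_cases : ∀ i, m' i = a i ∨ m' i = c i := by
        intro i
        by_cases h : i ∈ insert i₀ s
        · left; funext t; simp only [hm'_def]; rw [if_pos h]
        · right; funext t; simp only [hm'_def]; rw [if_neg h]
      have hm'_i0 : m' i₀ = a i₀ := by
        funext t; simp only [hm'_def]; rw [if_pos (Finset.mem_insert_self i₀ s)]
      have hm_i0 : m i₀ = c i₀ := by
        funext t; simp only [hm_def]; rw [if_neg hi₀]
      have hm'_eq : ∀ i, i ≠ i₀ → m' i = m i := by
        intro i hne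
        funext t; simp only [hm'_def, hm_def]
        by_cases h : i ∈ s
        · rw [if_pos (Finset.mem_insert_of_mem h), if_pos h]
        · rw [if_neg (by simp [Finset.mem_insert, hne, h]), if_neg h]
      have hD_i0 : D i₀ = fun t => |a i₀ t - c i₀ t| := by
        simp [hD_def]
      have hD_ne : ∀ i, i ≠ i₀ → D i = m i := by
        intro i hne; simp only [hD_def]; rw [if_neg hne]
      have hD_cases : ∀ i, D i = (fun t => |a i₀ t - c i₀ t|) ∨ (D i = a i ∨ D i = c i) := by
        intro i
        by_cases h : i = i₀
        · subst h; exact Or.inl hD_i0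
        · exact Or.inr (by rw [hD_ne i h]; exact hm_cases i)
      have hm_meas : ∀ i, Measurable (m i) := by
        intro i; rcases hm_cases i with h | h <;> rw [h]
        exacts [ham i, hcm i]
      have hm'_meas : ∀ i, Measurable (m' i) := by
        intro i; rcases hm'_cases i with h | h <;> rw [h]
        exacts [ham i, hcm i]
      have hm_nn : ∀ i x, 0 ≤ m i x := by
        intro i x; rcases hm_cases i with h | h <;> rw [h]
        exacts [hann i x, hcnn i x]
      have hm'_nn : ∀ i x, 0 ≤ m' i x := by
        intro i x; rcases hm'_cases i with h | h <;> rw [h]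
        exacts [hann i x, hcnn i x]
      have hm_bd : ∀ i x, m i x ≤ 2 * M := by
        intro i x
        have : m i x ≤ M := by
          rcases hm_cases i with h | h <;> rw [h]
          exacts [habd i x, hcbd i x]
        linarith
      have hm'_bd : ∀ i x, m' i x ≤ 2 * M := by
        intro i x
        have : m' i x ≤ M := by
          rcases hm'_cases i with h | h <;> rw [h]
          exacts [habd i x, hcbd i x]
        linarith
      have hm_int1 : ∀ i, ∫ t in I01, m i t = 1 := by
        intro i; rcases hm_cases i with h | h <;> rw [h]
        exacts [ha1 i, hc1 i]
      have habs_bd : ∀ t, |a i₀ t - c i₀ t| ≤ 2 * M := by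
        intro t
        calc |a i₀ t - c i₀ t| ≤ |a i₀ t| + |c i₀ t| := abs_sub _ _
          _ ≤ M + M := add_le_add (by rw [abs_of_nonneg (hann i₀ t)]; exact habd i₀ t)
              (by rw [abs_of_nonneg (hcnn i₀ t)]; exact hcbd i₀ t)
          _ = 2 * M := by ring
      have hD_meas : ∀ i, Measurable (D i) := by
        intro i
        rcases hD_cases i with h | h | h <;> rw [h]
        exacts [((ham i₀).sub (hcm i₀)).abs, ham i, hcm i]
      have hD_nn : ∀ i x, 0 ≤ D i x := by
        intro i x
        rcases hD_cases i with h | h | h <;> rw [h]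
        exacts [abs_nonneg _, hann i x, hcnn i x]
      have hD_bd : ∀ i x, D i x ≤ 2 * M := by
        intro i x
        rcases hD_cases i with h | h | h <;> rw [h]
        exacts [habs_bd x, le_trans (habd i x) (by linarith), le_trans (hcbd i x) (by linarith)]
      -- key pointwise identity
      have hkey1 : ∀ x : Fin d → ℝ,
          |(∏ i, m' i (x i)) - ∏ i, m i (x i)| = ∏ i, D i (x i) := by
        intro x
        have e1 : (∏ i, m' i (x i)) = a i₀ (x i₀) * ∏ i ∈ Finset.univ.erase i₀, m i (x i) := by
          rw [← Finset.mul_prod_erase Finset.univ (fun i => m' i (x i)) (Finset.mem_univ i₀)]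
          congr 1
          · rw [hm'_i0]
          · exact Finset.prod_congr rfl fun i hi => by
              rw [hm'_eq i (Finset.ne_of_mem_erase hi)]
        have e2 : (∏ i, m i (x i)) = c i₀ (x i₀) * ∏ i ∈ Finset.univ.erase i₀, m i (x i) := by
          rw [← Finset.mul_prod_erase Finset.univ (fun i => m i (x i)) (Finset.mem_univ i₀)]
          congr 1
          rw [hm_i0]
        rw [e1, e2, ← sub_mul, abs_mul,
          abs_of_nonneg (Finset.prod_nonneg fun i _ => hm_nn i (x i))]
        rw [← Finset.mul_prod_erase Finset.univ (fun i => D i (x i)) (Finset.mem_univ i₀)]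
        congr 1
        · rw [hD_i0]
        · exact Finset.prod_congr rfl fun i hi => by
            rw [hD_ne i (Finset.ne_of_mem_erase hi)]
      -- integrability
      have hP'int := hprod_int m' hm'_meas hm'_nn hm'_bd
      have hQint := hprod_int m hm_meas hm_nn hm_bd
      have hRint := hprod_int c hcm hcnn (fun i x => by linarith [hcbd i x])
      have habs1 : IntegrableOn
          (fun x : Fin d → ℝ => |(∏ i, m' i (x i)) - ∏ i, m i (x i)|) (unitCube d) :=
        (hP'int.sub hQint).abs
      have habs2 : IntegrableOn
          (fun x : Fin d → ℝ => |(∏ i, m i (x i)) - ∏ i, c i (x i)|) (unitCube d) :=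
        (hQint.sub hRint).abs
      -- the main estimate
      have step1 : ∫ x in unitCube d, |(∏ i, m' i (x i)) - ∏ i, c i (x i)|
          ≤ (∫ x in unitCube d, |(∏ i, m' i (x i)) - ∏ i, m i (x i)|)
            + ∫ x in unitCube d, |(∏ i, m i (x i)) - ∏ i, c i (x i)| := by
        rw [← integral_add habs1 habs2]
        apply integral_mono_of_nonneg
        · exact ae_of_all _ fun x => abs_nonneg _
        · exact habs1.add habs2
        · exact ae_of_all _ fun x => abs_sub_le _ _ _
      have step2 : ∫ x in unitCube d, |(∏ i, m' i (x i)) - ∏ i, m i (x i)| ≤ ε i₀ := by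
        have : (fun x : Fin d → ℝ => |(∏ i, m' i (x i)) - ∏ i, m i (x i)|)
            = fun x => ∏ i, D i (x i) := funext hkey1
        rw [show (∫ x in unitCube d, |(∏ i, m' i (x i)) - ∏ i, m i (x i)|)
            = ∫ x in unitCube d, ∏ i, D i (x i) from by rw [this]]
        rw [cube_integral_prod D]
        rw [← Finset.mul_prod_erase Finset.univ (fun i => ∫ t in I01, D i t)
          (Finset.mem_univ i₀)]
        have hD0 : (∫ t in I01, D i₀ t) = ∫ t in I01, |a i₀ t - c i₀ t| := by
          rw [hD_i0]
        have hDrest : (∏ i ∈ Finset.univ.erase i₀, ∫ t in I01, D i t) = 1 := by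
          apply Finset.prod_eq_one
          intro i hi
          have hne : i ≠ i₀ := Finset.ne_of_mem_erase hi
          rw [hD_ne i hne]
          exact hm_int1 i
        rw [hD0, hDrest, mul_one]
        exact hε i₀
      calc ∫ x in unitCube d, |(∏ i, m' i (x i)) - ∏ i, c i (x i)| ≤ _ := step1
        _ ≤ ε i₀ + ∑ i ∈ s, ε i := add_le_add step2 IH
        _ = ∑ i ∈ insert i₀ s, ε i := (Finset.sum_insert hi₀).symm
  have := key Finset.univ
  simpa using this

end P5

section P6

/-- Full-histogram approximation: any density on the cube is approximated in L¹ by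
grid histograms. -/
lemma exists_hist_approx {d : ℕ} (p : (Fin d → ℝ) → ℝ) (hmeas : Measurable p)
    (hnonneg : ∀ x, 0 ≤ p x) (hint : ∫ x in unitCube d, p x = 1) {ε : ℝ} (hε : 0 < ε) :
    ∃ B : ℕ, 0 < B ∧ ∃ w : (Fin d → Fin B) → ℝ, (∀ S, 0 ≤ w S) ∧ (∑ S, w S = 1) ∧
      ∫ x in unitCube d, |p x - ∑ S, w S * ∏ i, h1 B (S i) (x i)| ≤ ε := by
  -- p is integrable on the cube
  have hpint : IntegrableOn p (unitCube d) := by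
    by_contra h
    rw [integral_undef h] at hint
    norm_num at hint
  set f : (Fin d → ℝ) → ℝ := (unitCube d).indicator p with hf_def
  have hf_int : Integrable f :=
    (integrable_indicator_iff (measurableSet_unitCube d)).mpr hpint
  obtain ⟨g, hg_supp, hg_close, hg_cont, hg_int⟩ :=
    hf_int.exists_hasCompactSupport_integral_sub_le (show (0:ℝ) < ε/6 by linarith)
  have hg_unif : UniformContinuous g := hg_supp.uniformContinuous_of_continuous hg_cont
  obtain ⟨δ, hδpos, hδ⟩ := Metric.uniformContinuous_iff.mp hg_unif (ε/6) (by linarith)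
  obtain ⟨n, hn⟩ := exists_nat_one_div_lt hδpos
  set B : ℕ := n + 1 with hB_def
  have hB : 0 < B := Nat.succ_pos n
  have hBR : (0:ℝ) < B := by exact_mod_cast hB
  have hBδ : 1 / (B:ℝ) < δ := by exact_mod_cast hn
  refine ⟨B, hB, fun S => ∫ x in cubeS d B S, p x, ?_, ?_, ?_⟩
  · exact fun S => setIntegral_nonneg (measurableSet_cubeS d B S) (fun x _ => hnonneg x)
  · rw [← integral_cube_eq_sum_cubeS hB hpint]
    exact hint
  -- main estimate
  set w : (Fin d → Fin B) → ℝ := fun S => ∫ x in cubeS d B S, p x with hw_def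
  have hw_nn : ∀ S, 0 ≤ w S :=
    fun S => setIntegral_nonneg (measurableSet_cubeS d B S) (fun x _ => hnonneg x)
  have hw_sum : ∑ S, w S = 1 := by
    rw [hw_def, ← integral_cube_eq_sum_cubeS hB hpint]; exact hint
  set q : (Fin d → ℝ) → ℝ := fun x => ∑ S, w S * ∏ i, h1 B (S i) (x i) with hq_def
  -- pointwise form of the product of h1's
  have hprod_eq : ∀ (S : Fin d → Fin B) (x : Fin d → ℝ),
      (∏ i, h1 B (S i) (x i)) =
        (B:ℝ)^d * (cubeS d B S).indicator (fun _ => (1:ℝ)) x := by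
    intro S x
    by_cases hx : x ∈ cubeS d B S
    · rw [Set.indicator_of_mem hx, mul_one]
      calc (∏ i, h1 B (S i) (x i)) = ∏ _i : Fin d, (B:ℝ) :=
            Finset.prod_congr rfl fun i _ => h1_of_mem (mem_cubeS.mp hx i)
        _ = (B:ℝ)^d := by rw [Finset.prod_const, Finset.card_univ, Fintype.card_fin]
    · rw [Set.indicator_of_notMem hx, mul_zero]
      obtain ⟨i, hi⟩ := not_forall.mp (fun h => hx (mem_cubeS.mpr h))
      exact Finset.prod_eq_zero (Finset.mem_univ i) (h1_of_not_mem hi)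
  -- q is constant B^d * w T on each subcube
  have hq_on : ∀ (T : Fin d → Fin B) (x : Fin d → ℝ), x ∈ cubeS d B T →
      q x = (B:ℝ)^d * w T := by
    intro T x hx
    rw [hq_def]
    show (∑ S, w S * ∏ i, h1 B (S i) (x i)) = _
    rw [Finset.sum_eq_single_of_mem T (Finset.mem_univ T)]
    · rw [hprod_eq T x, Set.indicator_of_mem hx]; ring
    · intro S _ hne
      rw [hprod_eq S x, Set.indicator_of_notMem (fun hx' => hne (cubeS_eq_of_mem hx' hx))]
      ring
  -- q is measurable and bounded
  have hq_meas : Measurable q := by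
    apply Finset.measurable_sum
    intro S _
    exact (measurable_pi_prod _ (fun i => measurable_h1 B (S i))).const_mul _
  have hq_nn : ∀ x, 0 ≤ q x := by
    intro x
    apply Finset.sum_nonneg
    intro S _
    exact mul_nonneg (hw_nn S) (Finset.prod_nonneg fun i _ => h1_nonneg B (S i) (x i))
  have hq_bd : ∀ x, q x ≤ (B:ℝ)^d := by
    intro x
    calc q x ≤ ∑ S, w S * (B:ℝ)^d := by
          apply Finset.sum_le_sum
          intro S _
          apply mul_le_mul_of_nonneg_left _ (hw_nn S)
          rw [hprod_eq S x]
          rcases Set.indicator_eq_zero_or_self (cubeS d B S) (fun _ => (1:ℝ)) x with h | h <;>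
            rw [h]
          · simp
          · simp
      _ = (B:ℝ)^d := by rw [← Finset.sum_mul, hw_sum, one_mul]
  have hq_int : IntegrableOn q (unitCube d) :=
    integrableOn_cube_of_bounded hq_meas (M := (B:ℝ)^d)
      (fun x => by rw [abs_of_nonneg (hq_nn x)]; exact hq_bd x)
  have habs_int : IntegrableOn (fun x => |p x - q x|) (unitCube d) := (hpint.sub hq_int).abs
  -- split into subcubes
  rw [show (∫ x in unitCube d, |p x - ∑ S, w S * ∏ i, h1 B (S i) (x i)|)
      = ∫ x in unitCube d, |p x - q x| from rfl]
  rw [integral_cube_eq_sum_cubeS hB habs_int]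
  -- per-cube estimates
  have hvolS : ∀ T : Fin d → Fin B, (volume (cubeS d B T)).toReal = (1/(B:ℝ))^d :=
    fun T => volume_cubeS_toReal d B T
  have hvol_fin : ∀ T : Fin d → Fin B, volume (cubeS d B T) < ⊤ := by
    intro T; rw [volume_cubeS]; exact ENNReal.ofReal_lt_top
  have hBinv : (B:ℝ)^d * (1/(B:ℝ))^d = 1 := by
    rw [← mul_pow, mul_one_div_cancel hBR.ne', one_pow]
  have hg_intS : ∀ T : Fin d → Fin B, IntegrableOn g (cubeS d B T) := fun T => hg_int.integrableOn
  have hp_intS : ∀ T : Fin d → Fin B, IntegrableOn p (cubeS d B T) :=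
    fun T => hpint.mono_set (cubeS_subset_unitCube T)
  have hpg_close : ∫ x in unitCube d, |p x - g x| ≤ ε/6 := by
    have h1 : ∫ x in unitCube d, |p x - g x| = ∫ x in unitCube d, ‖f x - g x‖ := by
      apply setIntegral_congr_fun (measurableSet_unitCube d)
      intro x hx
      show |p x - g x| = ‖f x - g x‖
      rw [Real.norm_eq_abs, hf_def, Set.indicator_of_mem hx]
    rw [h1]
    refine le_trans (setIntegral_le_integral (hf_int.sub hg_int).norm
      (ae_of_all _ fun x => norm_nonneg _)) hg_close
  have hterm : ∀ T : Fin d → Fin B,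
      (∫ x in cubeS d B T, |p x - q x|)
        ≤ 2 * (∫ x in cubeS d B T, |p x - g x|) + (1/(B:ℝ))^d * (ε/6) := by
    intro T
    set s := cubeS d B T with hs_def
    have hs_meas : MeasurableSet s := measurableSet_cubeS d B T
    have hconst_int : ∀ r : ℝ, IntegrableOn (fun _ => r) s :=
      fun r => integrableOn_const (hvol_fin T).ne
    set wg : ℝ := ∫ x in s, g x with hwg_def
    -- oscillation bound for g on the subcube
    have hosc : ∀ x ∈ s, |g x - (B:ℝ)^d * wg| ≤ ε/6 := by
      intro x hx
      have hconst : (∫ _y in s, g x) = (1/(B:ℝ))^d * g x := by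
        rw [setIntegral_const, smul_eq_mul, measureReal_def, hvolS T]
      have hsub : (∫ y in s, (g x - g y)) = (1/(B:ℝ))^d * g x - wg := by
        rw [integral_sub (hconst_int (g x)) (hg_intS T), hconst]
      have hid : g x - (B:ℝ)^d * wg = (B:ℝ)^d * ∫ y in s, (g x - g y) := by
        rw [hsub, mul_sub, ← mul_assoc, hBinv, one_mul]
      rw [hid, abs_mul, abs_of_nonneg (by positivity : (0:ℝ) ≤ (B:ℝ)^d)]
      have h2 : |∫ y in s, (g x - g y)| ≤ ∫ y in s, |g x - g y| := by
        simpa [Real.norm_eq_abs] using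
          norm_integral_le_integral_norm (μ := volume.restrict s) (fun y => g x - g y)
      have h3 : (∫ y in s, |g x - g y|) ≤ ∫ _y in s, (ε/6) := by
        apply setIntegral_mono_on
        · exact ((hconst_int (g x)).sub (hg_intS T)).abs
        · exact hconst_int _
        · exact hs_meas
        · intro y hy
          have hdist : dist x y < δ := by
            rw [dist_pi_lt_iff hδpos]
            intro i
            obtain ⟨hx1, hx2⟩ := mem_cubeS.mp hx i
            obtain ⟨hy1, hy2⟩ := mem_cubeS.mp hy i
            rw [Real.dist_eq]
            have hlen : ((T i : ℝ) + 1)/(B:ℝ) = (T i : ℝ)/(B:ℝ) + 1/(B:ℝ) := by ring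
            calc |x i - y i| < 1/(B:ℝ) := by
                  rw [abs_sub_lt_iff]
                  constructor <;> [linarith [hx2, hy1]; linarith [hy2, hx1]]
              _ < δ := hBδ
          have hgd := hδ hdist
          rw [Real.dist_eq] at hgd
          exact hgd.le
      calc (B:ℝ)^d * |∫ y in s, (g x - g y)| ≤ (B:ℝ)^d * ((1/(B:ℝ))^d * (ε/6)) := by
            apply mul_le_mul_of_nonneg_left _ (by positivity)
            refine le_trans h2 (le_trans h3 ?_)
            rw [setIntegral_const, smul_eq_mul, measureReal_def, hvolS T]
        _ = ε/6 := by rw [← mul_assoc, hBinv, one_mul]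
    -- replace q by its constant value
    have hq_congr : (∫ x in s, |p x - q x|) = ∫ x in s, |p x - (B:ℝ)^d * w T| :=
      setIntegral_congr_fun hs_meas (fun x hx => by rw [hq_on T x hx])
    -- the constant-difference term
    have hwg_wT : |(B:ℝ)^d * wg - (B:ℝ)^d * w T| * (1/(B:ℝ))^d ≤ ∫ x in s, |p x - g x| := by
      have e1 : wg - w T = ∫ x in s, (g x - p x) :=
        (integral_sub (hg_intS T) (hp_intS T)).symm
      have e2 : |wg - w T| ≤ ∫ x in s, |g x - p x| := by
        rw [e1]
        simpa [Real.norm_eq_abs] using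
          norm_integral_le_integral_norm (μ := volume.restrict s) (fun x => g x - p x)
      have e3 : (∫ x in s, |g x - p x|) = ∫ x in s, |p x - g x| := by
        apply setIntegral_congr_fun hs_meas
        intro x _
        exact abs_sub_comm _ _
      calc |(B:ℝ)^d * wg - (B:ℝ)^d * w T| * (1/(B:ℝ))^d
          = |wg - w T| * ((B:ℝ)^d * (1/(B:ℝ))^d) := by
            rw [← mul_sub, abs_mul, abs_of_nonneg (by positivity : (0:ℝ) ≤ (B:ℝ)^d)]
            ring
        _ = |wg - w T| := by rw [hBinv, mul_one]
        _ ≤ _ := e2.trans e3.le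
    -- integrability of the three pieces
    have hI1 : IntegrableOn (fun x => |p x - g x|) s := ((hp_intS T).sub (hg_intS T)).abs
    have hI2 : IntegrableOn (fun x => |g x - (B:ℝ)^d * wg|) s :=
      ((hg_intS T).sub (hconst_int _)).abs
    have hI3 : IntegrableOn (fun _ => |(B:ℝ)^d * wg - (B:ℝ)^d * w T|) s := hconst_int _
    have hptw : ∀ x, |p x - (B:ℝ)^d * w T| ≤
        |p x - g x| + |g x - (B:ℝ)^d * wg| + |(B:ℝ)^d * wg - (B:ℝ)^d * w T| := by
      intro x
      calc |p x - (B:ℝ)^d * w T| ≤ |p x - g x| + |g x - (B:ℝ)^d * w T| := abs_sub_le _ _ _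
        _ ≤ |p x - g x| + (|g x - (B:ℝ)^d * wg| + |(B:ℝ)^d * wg - (B:ℝ)^d * w T|) :=
            add_le_add le_rfl (abs_sub_le _ _ _)
        _ = _ := by ring
    have hmono : (∫ x in s, |p x - (B:ℝ)^d * w T|) ≤
        (∫ x in s, |p x - g x|) + (∫ x in s, |g x - (B:ℝ)^d * wg|)
          + ∫ _x in s, |(B:ℝ)^d * wg - (B:ℝ)^d * w T| := by
      have h0 : (∫ x in s, |p x - (B:ℝ)^d * w T|) ≤
          ∫ x in s, (|p x - g x| + |g x - (B:ℝ)^d * wg|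
            + |(B:ℝ)^d * wg - (B:ℝ)^d * w T|) := by
        apply integral_mono_of_nonneg (ae_of_all _ fun x => abs_nonneg _)
        · exact (hI1.add hI2).add hI3
        · exact ae_of_all _ fun x => hptw x
      have hAB : IntegrableOn (fun x => |p x - g x| + |g x - (B:ℝ)^d * wg|) s :=
        hI1.add hI2
      have e1 : (∫ x in s, (|p x - g x| + |g x - (B:ℝ)^d * wg|
            + |(B:ℝ)^d * wg - (B:ℝ)^d * w T|))
          = (∫ x in s, (|p x - g x| + |g x - (B:ℝ)^d * wg|))
            + ∫ _x in s, |(B:ℝ)^d * wg - (B:ℝ)^d * w T| := integral_add hAB hI3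
      have e2 : (∫ x in s, (|p x - g x| + |g x - (B:ℝ)^d * wg|))
          = (∫ x in s, |p x - g x|) + ∫ x in s, |g x - (B:ℝ)^d * wg| := integral_add hI1 hI2
      rw [e1, e2] at h0
      exact h0
    have hmid : (∫ x in s, |g x - (B:ℝ)^d * wg|) ≤ (1/(B:ℝ))^d * (ε/6) := by
      calc (∫ x in s, |g x - (B:ℝ)^d * wg|) ≤ ∫ _x in s, (ε/6) := by
            apply setIntegral_mono_on hI2 (hconst_int _) hs_meas
            intro x hx
            exact hosc x hx
        _ = (1/(B:ℝ))^d * (ε/6) := by rw [setIntegral_const, smul_eq_mul, measureReal_def, hvolS T]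
    have hlast : (∫ _x in s, |(B:ℝ)^d * wg - (B:ℝ)^d * w T|) ≤ ∫ x in s, |p x - g x| := by
      rw [setIntegral_const, smul_eq_mul, measureReal_def, hvolS T, mul_comm]
      exact hwg_wT
    rw [hq_congr]
    calc (∫ x in s, |p x - (B:ℝ)^d * w T|) ≤ _ := hmono
      _ ≤ (∫ x in s, |p x - g x|) + (1/(B:ℝ))^d * (ε/6) + ∫ x in s, |p x - g x| :=
          add_le_add (add_le_add le_rfl hmid) hlast
      _ = 2 * (∫ x in s, |p x - g x|) + (1/(B:ℝ))^d * (ε/6) := by ring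
  -- sum the per-cube bounds
  have hpg_int : IntegrableOn (fun x => |p x - g x|) (unitCube d) :=
    (hpint.sub hg_int.integrableOn).abs
  have hcard : ((Finset.univ : Finset (Fin d → Fin B)).card : ℝ) = (B:ℝ)^d := by
    rw [Finset.card_univ, Fintype.card_fun, Fintype.card_fin, Fintype.card_fin]
    push_cast
    ring
  calc (∑ T : Fin d → Fin B, ∫ x in cubeS d B T, |p x - q x|)
      ≤ ∑ T : Fin d → Fin B,
          (2 * (∫ x in cubeS d B T, |p x - g x|) + (1/(B:ℝ))^d * (ε/6)) :=
        Finset.sum_le_sum fun T _ => hterm T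
    _ = 2 * (∑ T : Fin d → Fin B, ∫ x in cubeS d B T, |p x - g x|)
        + ((Finset.univ : Finset (Fin d → Fin B)).card : ℝ) * ((1/(B:ℝ))^d * (ε/6)) := by
        rw [Finset.sum_add_distrib, Finset.sum_const, ← Finset.mul_sum, nsmul_eq_mul]
    _ = 2 * (∫ x in unitCube d, |p x - g x|) + (B:ℝ)^d * ((1/(B:ℝ))^d * (ε/6)) := by
        rw [← integral_cube_eq_sum_cubeS hB hpg_int, hcard]
    _ ≤ 2 * (ε/6) + (ε/6) := by
        rw [← mul_assoc, hBinv, one_mul]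
        have := hpg_close
        gcongr
    _ ≤ ε := by linarith

end P6

section P7

lemma prod_integrableOn {d : ℕ} (u : Fin d → ℝ → ℝ) (hm : ∀ i, Measurable (u i))
    (hnn : ∀ i x, 0 ≤ u i x) {M : ℝ} (hbd : ∀ i x, u i x ≤ M) :
    IntegrableOn (fun x : Fin d → ℝ => ∏ i, u i (x i)) (unitCube d) := by
  apply integrableOn_cube_of_bounded (measurable_pi_prod u hm) (M := M ^ d)
  intro x
  rw [abs_of_nonneg (Finset.prod_nonneg fun i _ => hnn i (x i))]
  calc (∏ i, u i (x i)) ≤ ∏ _i : Fin d, M :=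
        Finset.prod_le_prod (fun i _ => hnn i (x i)) (fun i _ => hbd i (x i))
    _ = M ^ d := by rw [Finset.prod_const, Finset.card_univ, Fintype.card_fin]

lemma mix_integrableOn {d : ℕ} {ι : Type*} [Fintype ι] (w : ι → ℝ) (hw_nn : ∀ i, 0 ≤ w i)
    (u : ι → Fin d → ℝ → ℝ) (hum : ∀ i j, Measurable (u i j))
    (hnn : ∀ i j x, 0 ≤ u i j x) {M : ℝ} (hbd : ∀ i j x, u i j x ≤ M) :
    IntegrableOn (fun x : Fin d → ℝ => ∑ i, w i * ∏ j, u i j (x j)) (unitCube d) := by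
  apply MeasureTheory.integrable_finset_sum
  intro i _
  exact ((prod_integrableOn (u i) (hum i) (hnn i) (hbd i)).const_mul (w i))

end P7

end THB

/-- The bias of the best Tucker histogram approximation of any density on `[0,1)^d`
goes to zero when `b(n) → ∞` and `k(n) → ∞`. -/
theorem tucker_hist_bias_tendsto_zero (d : ℕ) (hd : 0 < d)
    (p : (Fin d → ℝ) → ℝ) (hmeas : Measurable p) (hnonneg : ∀ x, 0 ≤ p x)
    (hint : ∫ x in unitCube d, p x = 1)
    (b k : ℕ → ℕ) (hb : Tendsto b atTop atTop) (hk : Tendsto k atTop atTop) :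
    Tendsto (fun n =>
        sInf ((fun q => ∫ x in unitCube d, |p x - q x|) '' TuckerHist d (b n) (k n)))
      atTop (nhds 0) := by
  classical
  have hp_int : IntegrableOn p (unitCube d) := by
    by_contra h
    rw [integral_undef h] at hint
    norm_num at hint
  rw [Metric.tendsto_atTop]
  intro ε hε
  -- step 1 : full-histogram approximation at some resolution B
  obtain ⟨B, hB, w, hw_nn, hw_sum, hw_close⟩ :=
    exists_hist_approx p hmeas hnonneg hint (show (0:ℝ) < ε/4 by linarith)
  have hBR : (0:ℝ) < B := by exact_mod_cast hB
  -- threshold for the bin count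
  set Mb : ℕ := max 1 ⌈16 * (d:ℝ) * B / ε⌉₊ with hMb_def
  have hMb_bound : ∀ m : ℕ, Mb ≤ m → (d:ℝ) * (4 * B / m) ≤ ε / 4 := by
    intro m hm
    have hm1 : 1 ≤ m := le_trans (le_max_left _ _) hm
    have hmR : (0:ℝ) < m := by exact_mod_cast hm1
    have hceil : 16 * (d:ℝ) * B / ε ≤ m := by
      refine le_trans (Nat.le_ceil _) ?_
      exact_mod_cast le_trans (le_max_right 1 _) hm
    have h16 : 16 * (d:ℝ) * B ≤ m * ε := (div_le_iff₀ hε).mp hceil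
    rw [show (d:ℝ) * (4 * B / m) = 4 * d * B / m by ring, div_le_iff₀ hmR]
    nlinarith
  -- eventually both b n and k n are large
  have hev : ∀ᶠ n in atTop, Mb ≤ b n ∧ B ≤ k n :=
    (hb.eventually_ge_atTop Mb).and (hk.eventually_ge_atTop B)
  obtain ⟨N, hN⟩ := eventually_atTop.mp hev
  refine ⟨N, fun n hn => ?_⟩
  obtain ⟨hbn, hkn⟩ := hN n hn
  have hbn1 : 0 < b n := lt_of_lt_of_le (Nat.lt_of_lt_of_le Nat.zero_lt_one (le_max_left _ _)) hbn
  have hbnR : (0:ℝ) < b n := by exact_mod_cast hbn1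
  -- 1-D approximations of the B-bin basis functions by (b n)-bin histograms
  choose G hG_mem hG_close using fun j : Fin B => hist1_approx B j (b n) hbn1
  have hGp := fun j : Fin B => hist1_props (hG_mem j)
  -- the uniform (b n)-bin histogram, used as filler
  set unif : ℝ → ℝ := fun x => ∑ i : Fin (b n), (1/(b n : ℝ)) * h1 (b n) i x with hunif_def
  have hunif_mem : unif ∈ Hist1 (b n) := by
    refine ⟨fun _ => 1/(b n : ℝ), ⟨fun i => by positivity, ?_⟩, rfl⟩
    rw [Finset.sum_const, Finset.card_univ, Fintype.card_fin, nsmul_eq_mul]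
    field_simp
  -- the extended family indexed by Fin (k n)
  set Gk : Fin (k n) → ℝ → ℝ := fun j => if h : (j : ℕ) < B then G ⟨j, h⟩ else unif
    with hGk_def
  have hGk_mem : ∀ j, Gk j ∈ Hist1 (b n) := by
    intro j
    by_cases h : (j : ℕ) < B
    · rw [hGk_def]; simp only []; rw [dif_pos h]; exact hG_mem _
    · rw [hGk_def]; simp only []; rw [dif_neg h]; exact hunif_mem
  -- the embedding of the index set
  have hBk : B ≤ k n := hkn
  set e : (Fin d → Fin B) → (Fin d → Fin (k n)) := fun T i => Fin.castLE hBk (T i) with he_def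
  have he_inj : Function.Injective e := by
    intro T T' h
    funext i
    exact Fin.castLE_injective hBk (congrFun h i)
  have hGk_e : ∀ j : Fin B, Gk (Fin.castLE hBk j) = G j := by
    intro j
    rw [hGk_def]
    simp only []
    rw [dif_pos (show ((Fin.castLE hBk j : ℕ) < B) from j.2)]
    exact congrArg G (Fin.ext rfl)
  -- the extended weight tensor
  set W : (Fin d → Fin (k n)) → ℝ :=
    fun S => if h : ∀ i, ((S i : ℕ) < B) then w (fun i => ⟨S i, h i⟩) else 0 with hW_def
  have hW_nn : ∀ S, 0 ≤ W S := by
    intro S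
    rw [hW_def]
    by_cases h : ∀ i, ((S i : ℕ) < B)
    · simp only []; rw [dif_pos h]; exact hw_nn _
    · simp only []; rw [dif_neg h]
  have hW_e : ∀ T : Fin d → Fin B, W (e T) = w T := by
    intro T
    rw [hW_def]
    simp only []
    rw [dif_pos (show ∀ i, ((e T i : ℕ) < B) from fun i => (T i).2)]
    congr 1
  have hW_zero : ∀ S, S ∉ Finset.univ.image e → W S = 0 := by
    intro S hS
    rw [hW_def]
    simp only []
    rw [dif_neg]
    intro h
    apply hS
    refine Finset.mem_image.mpr ⟨fun i => ⟨S i, h i⟩, Finset.mem_univ _, ?_⟩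
    funext i
    exact Fin.ext rfl
  -- reindexing sums over the embedded grid
  have hsum_e : ∀ F : (Fin d → Fin (k n)) → ℝ, (∀ S, S ∉ Finset.univ.image e → F S = 0) →
      ∑ S, F S = ∑ T : Fin d → Fin B, F (e T) := by
    intro F hF
    rw [← Finset.sum_subset (Finset.subset_univ (Finset.univ.image e))
      (fun S _ hS => hF S hS)]
    exact Finset.sum_image fun T _ T' _ h => he_inj h
  have hW_tensor : IsProbTensor W := by
    refine ⟨hW_nn, ?_⟩
    rw [hsum_e W (fun S hS => hW_zero S hS)]
    rw [show (∑ T : Fin d → Fin B, W (e T)) = ∑ T : Fin d → Fin B, w T from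
      Finset.sum_congr rfl fun T _ => hW_e T]
    exact hw_sum
  -- the Tucker candidate
  set q : (Fin d → ℝ) → ℝ := fun x => ∑ S, W S * ∏ i, Gk (S i) (x i) with hq_def
  have hq_mem : q ∈ TuckerHist d (b n) (k n) :=
    ⟨W, hW_tensor, fun _ j => Gk j, fun i j => hGk_mem j, rfl⟩
  -- q in reduced form
  have hq_eq : ∀ x, q x = ∑ T : Fin d → Fin B, w T * ∏ i, G (T i) (x i) := by
    intro x
    rw [hq_def]
    simp only []
    rw [hsum_e (fun S => W S * ∏ i, Gk (S i) (x i))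
      (fun S hS => by show W S * _ = 0; rw [hW_zero S hS, zero_mul])]
    apply Finset.sum_congr rfl
    intro T _
    rw [hW_e T]
    congr 1
    exact Finset.prod_congr rfl fun i _ => by rw [show e T i = Fin.castLE hBk (T i) from rfl,
      hGk_e (T i)]
  -- the reference histogram
  set qB : (Fin d → ℝ) → ℝ := fun x => ∑ T : Fin d → Fin B, w T * ∏ i, h1 B (T i) (x i)
    with hqB_def
  -- integrability of everything in sight
  have hqB_int : IntegrableOn qB (unitCube d) :=
    mix_integrableOn w hw_nn (fun T i => h1 B (T i)) (fun T i => measurable_h1 B (T i))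
      (fun T i x => h1_nonneg B (T i) x) (fun T i x => h1_le B (T i) x)
  have hq2_int : IntegrableOn (fun x => ∑ T : Fin d → Fin B, w T * ∏ i, G (T i) (x i))
      (unitCube d) :=
    mix_integrableOn w hw_nn (fun T i => G (T i)) (fun T i => (hGp (T i)).1)
      (fun T i x => (hGp (T i)).2.1 x) (fun T i x => (hGp (T i)).2.2.1 x)
  have hq_int : IntegrableOn q (unitCube d) := by
    rw [show q = fun x => ∑ T : Fin d → Fin B, w T * ∏ i, G (T i) (x i) from funext hq_eq]
    exact hq2_int
  -- the telescope estimate for each grid cell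
  have htel : ∀ T : Fin d → Fin B,
      (∫ x in unitCube d, |(∏ i, h1 B (T i) (x i)) - ∏ i, G (T i) (x i)|)
        ≤ (d:ℝ) * (4 * B / b n) := by
    intro T
    have := telescope (fun i => h1 B (T i)) (fun i => G (T i)) ((B:ℝ) + (b n : ℝ))
      (by positivity)
      (fun i => measurable_h1 B (T i)) (fun i => (hGp (T i)).1)
      (fun i x => h1_nonneg B (T i) x) (fun i x => (hGp (T i)).2.1 x)
      (fun i x => le_trans (h1_le B (T i) x) (by linarith))
      (fun i x => le_trans ((hGp (T i)).2.2.1 x) (by linarith))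
      (fun i => integral_I01_h1 B (T i)) (fun i => (hGp (T i)).2.2.2)
      (fun _ => 4 * (B:ℝ) / b n) (fun i => hG_close (T i))
    refine le_trans this ?_
    rw [Finset.sum_const, Finset.card_univ, Fintype.card_fin, nsmul_eq_mul]
  -- distance between qB and q
  have hdiff : (∫ x in unitCube d, |qB x - q x|) ≤ ε / 4 := by
    have hptw : ∀ x, |qB x - q x| ≤
        ∑ T : Fin d → Fin B, w T * |(∏ i, h1 B (T i) (x i)) - ∏ i, G (T i) (x i)| := by
      intro x
      rw [hqB_def, hq_eq x]
      simp only []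
      rw [← Finset.sum_sub_distrib]
      refine le_trans (Finset.abs_sum_le_sum_abs _ _) ?_
      apply Finset.sum_le_sum
      intro T _
      rw [← mul_sub, abs_mul, abs_of_nonneg (hw_nn T)]
    have hterm_int : ∀ T : Fin d → Fin B, IntegrableOn
        (fun x => |(∏ i, h1 B (T i) (x i)) - ∏ i, G (T i) (x i)|) (unitCube d) := by
      intro T
      exact ((prod_integrableOn (fun i => h1 B (T i)) (fun i => measurable_h1 B (T i))
          (fun i x => h1_nonneg B (T i) x) (fun i x => h1_le B (T i) x)).sub
        (prod_integrableOn (fun i => G (T i)) (fun i => (hGp (T i)).1)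
          (fun i x => (hGp (T i)).2.1 x) (fun i x => (hGp (T i)).2.2.1 x))).abs
    have hsum_int : IntegrableOn (fun x => ∑ T : Fin d → Fin B,
        w T * |(∏ i, h1 B (T i) (x i)) - ∏ i, G (T i) (x i)|) (unitCube d) :=
      MeasureTheory.integrable_finset_sum _ (fun T _ => (hterm_int T).const_mul _)
    calc (∫ x in unitCube d, |qB x - q x|)
        ≤ ∫ x in unitCube d, ∑ T : Fin d → Fin B,
            w T * |(∏ i, h1 B (T i) (x i)) - ∏ i, G (T i) (x i)| := by
          apply integral_mono_of_nonneg (ae_of_all _ fun x => abs_nonneg _) hsum_int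
          exact ae_of_all _ hptw
      _ = ∑ T : Fin d → Fin B, ∫ x in unitCube d,
            w T * |(∏ i, h1 B (T i) (x i)) - ∏ i, G (T i) (x i)| :=
          integral_finset_sum _ (fun T _ => (hterm_int T).const_mul _)
      _ = ∑ T : Fin d → Fin B, w T * ∫ x in unitCube d,
            |(∏ i, h1 B (T i) (x i)) - ∏ i, G (T i) (x i)| := by
          exact Finset.sum_congr rfl fun T _ => integral_const_mul _ _
      _ ≤ ∑ T : Fin d → Fin B, w T * ((d:ℝ) * (4 * B / b n)) := by
          apply Finset.sum_le_sum
          intro T _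
          exact mul_le_mul_of_nonneg_left (htel T) (hw_nn T)
      _ = (d:ℝ) * (4 * B / b n) := by rw [← Finset.sum_mul, hw_sum, one_mul]
      _ ≤ ε / 4 := hMb_bound (b n) hbn
  -- triangle inequality
  have hclose : (∫ x in unitCube d, |p x - q x|) ≤ ε / 2 := by
    have hI1 : IntegrableOn (fun x => |p x - qB x|) (unitCube d) := (hp_int.sub hqB_int).abs
    have hI2 : IntegrableOn (fun x => |qB x - q x|) (unitCube d) := (hqB_int.sub hq_int).abs
    have h0 : (∫ x in unitCube d, |p x - q x|) ≤
        ∫ x in unitCube d, (|p x - qB x| + |qB x - q x|) := by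
      apply integral_mono_of_nonneg (ae_of_all _ fun x => abs_nonneg _) (hI1.add hI2)
      exact ae_of_all _ fun x => abs_sub_le _ _ _
    have he : (∫ x in unitCube d, (|p x - qB x| + |qB x - q x|))
        = (∫ x in unitCube d, |p x - qB x|) + ∫ x in unitCube d, |qB x - q x| :=
      integral_add hI1 hI2
    rw [he] at h0
    have hclose1 : (∫ x in unitCube d, |p x - qB x|) ≤ ε / 4 := hw_close
    linarith
  -- conclude
  have hbdd : BddBelow ((fun q => ∫ x in unitCube d, |p x - q x|) ''
      TuckerHist d (b n) (k n)) := by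
    refine ⟨0, ?_⟩
    rintro y ⟨q', _, rfl⟩
    exact setIntegral_nonneg (measurableSet_unitCube d) (fun x _ => abs_nonneg _)
  have hmem : (∫ x in unitCube d, |p x - q x|) ∈
      ((fun q => ∫ x in unitCube d, |p x - q x|) '' TuckerHist d (b n) (k n)) :=
    ⟨q, hq_mem, rfl⟩
  have hle := csInf_le hbdd hmem
  have hnn : 0 ≤ sInf ((fun q => ∫ x in unitCube d, |p x - q x|) ''
      TuckerHist d (b n) (k n)) := by
    apply le_csInf ⟨_, hmem⟩
    rintro y ⟨q', _, rfl⟩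
    exact setIntegral_nonneg (measurableSet_unitCube d) (fun x _ => abs_nonneg _)
  rw [Real.dist_eq, sub_zero, abs_of_nonneg hnn]
  linarith
end
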